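/- Let α > 0, H ∈ (1/2, 1). Then for all T > 0, ∫_0^T ∫_0^T e^{αu} e^{αv} r_H(u, v) du dv ≤ C e^{2αT}, where C depends only on α and H and r_H is as defined. -/

import Mathlib

open MeasureTheory Real intervalIntegral

/-- The kernel r_H. -/
noncomputable def rker (H w z : ℝ) : ℝ :=
  H ^ (2 * H - 1) * (2 * H - 1) * (Real.exp (w / H) * Real.exp (z / H)) ^ (1 - H) *
    |Real.exp (w / H) - Real.exp (z / H)| ^ (2 * H - 2)

namespace Stmt17Aux

lemma integral_exp_mul (c a b : ℝ) (hc : c ≠ 0) :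
    ∫ x in a..b, Real.exp (c * x) = (Real.exp (c * b) - Real.exp (c * a)) / c := by
  have hd : ∀ x ∈ Set.uIcc a b,
      HasDerivAt (fun y => Real.exp (c * y) / c) (Real.exp (c * x)) x := by
    intro x _
    have h1 : HasDerivAt (fun y : ℝ => c * y) c x := by
      simpa using (hasDerivAt_id x).const_mul c
    have h2 := (h1.exp).div_const c
    have h3 : Real.exp (c * x) * c / c = Real.exp (c * x) := by field_simp
    simpa [h3] using h2
  have hi : IntervalIntegrable (fun x => Real.exp (c * x)) volume a b :=
    (Real.continuous_exp.comp (continuous_const.mul continuous_id)).intervalIntegrable a b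
  rw [intervalIntegral.integral_eq_sub_of_hasDerivAt hd hi]
  ring

lemma abs_rpow_int {β : ℝ} (hβ : -1 < β) (a b : ℝ) :
    IntervalIntegrable (fun s : ℝ => |s| ^ β) volume a b := by
  have key : ∀ c : ℝ, 0 ≤ c → IntervalIntegrable (fun s : ℝ => |s| ^ β) volume 0 c := by
    intro c hc
    constructor
    · refine ((intervalIntegrable_rpow' hβ (a := 0) (b := c)).1).congr_fun ?_ measurableSet_Ioc
      intro s hs
      simp [abs_of_pos hs.1]
    · rw [Set.Ioc_eq_empty (by simpa using not_lt.2 hc)]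
      exact integrableOn_empty
  have key2 : ∀ c : ℝ, IntervalIntegrable (fun s : ℝ => |s| ^ β) volume 0 c := by
    intro c
    rcases le_total 0 c with hc | hc
    · exact key c hc
    · have h1 := (IntervalIntegrable.iff_comp_neg (by simp)).mp (key (-c) (by linarith))
      simpa [abs_neg] using h1
  exact (key2 a).symm.trans (key2 b)


lemma one_sub_exp_lb {x : ℝ} (hx : 0 ≤ x) :
    (1 - Real.exp (-1)) * min x 1 ≤ 1 - Real.exp (-x) := by
  rcases le_total x 1 with h | h
  · rw [min_eq_left h]
    have hc := convexOn_exp.2 (Set.mem_univ (-1 : ℝ)) (Set.mem_univ (0 : ℝ)) hx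
      (by linarith : (0:ℝ) ≤ 1 - x) (by ring)
    simp only [smul_eq_mul, mul_neg, mul_one, mul_zero, add_zero, Real.exp_zero] at hc
    nlinarith [hc]
  · rw [min_eq_right h]
    have : Real.exp (-x) ≤ Real.exp (-1) := Real.exp_le_exp.2 (by linarith)
    linarith

lemma min_rpow_le {x β : ℝ} (hx : 0 < x) (hβ : β ≤ 0) : (min x 1) ^ β ≤ x ^ β + 1 := by
  rcases le_total x 1 with h | h
  · rw [min_eq_left h]
    linarith [zero_le_one (α := ℝ)]
  · rw [min_eq_right h, Real.one_rpow]
    have := Real.rpow_nonneg hx.le β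
    linarith

lemma rpow_le_one_add {t β : ℝ} (ht : 0 ≤ t) (hβ0 : 0 ≤ β) (hβ1 : β ≤ 1) :
    t ^ β ≤ 1 + t := by
  rcases le_total t 1 with h | h
  · have := Real.rpow_le_one ht h hβ0
    linarith
  · have h2 : t ^ β ≤ t ^ (1:ℝ) := Real.rpow_le_rpow_of_exponent_le h hβ1
    rw [Real.rpow_one] at h2
    linarith

lemma one_add_le_exp {α t : ℝ} (hα : 0 < α) (ht : 0 ≤ t) :
    1 + t ≤ (1 + 2 / α) * Real.exp (α * t / 2) := by
  have h1 : (1:ℝ) ≤ Real.exp (α * t / 2) := Real.one_le_exp (by positivity)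
  have h2 : α * t / 2 ≤ Real.exp (α * t / 2) := by
    have := Real.add_one_le_exp (α * t / 2)
    linarith
  have h3 : t ≤ (2 / α) * Real.exp (α * t / 2) := by
    rw [div_mul_eq_mul_div, le_div_iff₀ hα]
    linarith
  calc 1 + t ≤ Real.exp (α * t / 2) + (2 / α) * Real.exp (α * t / 2) := by linarith
    _ = (1 + 2 / α) * Real.exp (α * t / 2) := by ring

lemma rpow_add_one_int {β : ℝ} (hβ : -1 < β) (a b : ℝ) :
    IntervalIntegrable (fun s : ℝ => s ^ β + 1) volume a b :=
  (intervalIntegrable_rpow' hβ).add intervalIntegrable_const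

lemma lemD {α β : ℝ} (hα : 0 < α) (hβ1 : -1 < β) (hβ0 : β < 0) {b : ℝ} (hb : 0 ≤ b) :
    ∫ s in (0:ℝ)..b, Real.exp (-(α * s)) * (s ^ β + 1) ≤ 1 / (β + 1) + 1 + 2 / α := by
  have hδ : 0 < β + 1 := by linarith
  have hint : ∀ a c : ℝ, IntervalIntegrable
      (fun s : ℝ => Real.exp (-(α * s)) * (s ^ β + 1)) volume a c := by
    intro a c
    exact (rpow_add_one_int hβ1 a c).continuousOn_mul
      ((Real.continuous_exp.comp (continuous_const.mul continuous_id).neg).continuousOn)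
  have hfirst : ∀ c : ℝ, 0 ≤ c → c ≤ 1 →
      ∫ s in (0:ℝ)..c, Real.exp (-(α * s)) * (s ^ β + 1) ≤ 1 / (β + 1) + 1 := by
    intro c hc0 hc1
    have hmono : ∫ s in (0:ℝ)..c, Real.exp (-(α * s)) * (s ^ β + 1)
        ≤ ∫ s in (0:ℝ)..c, (s ^ β + 1) := by
      refine intervalIntegral.integral_mono_on hc0 (hint 0 c) (rpow_add_one_int hβ1 0 c) ?_
      intro s hs
      have h1 : Real.exp (-(α * s)) ≤ 1 := Real.exp_le_one_iff.2 (by nlinarith [hs.1])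
      have h2 := Real.rpow_nonneg hs.1 β
      nlinarith
    have hcomp : ∫ s in (0:ℝ)..c, (s ^ β + 1) = c ^ (β + 1) / (β + 1) + c := by
      rw [intervalIntegral.integral_add (intervalIntegrable_rpow' hβ1) intervalIntegrable_const,
        integral_rpow (Or.inl hβ1), intervalIntegral.integral_const]
      rw [Real.zero_rpow (by linarith : β + 1 ≠ 0)]
      simp
    have hle : c ^ (β + 1) ≤ 1 := Real.rpow_le_one hc0 hc1 hδ.le
    have : c ^ (β + 1) / (β + 1) ≤ 1 / (β + 1) := by gcongr
    rw [hcomp] at hmono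
    linarith
  rcases le_total b 1 with hb1 | hb1
  · have := hfirst b hb hb1
    have h2 : (0:ℝ) ≤ 2 / α := by positivity
    linarith
  · have hsplit : ∫ s in (0:ℝ)..b, Real.exp (-(α * s)) * (s ^ β + 1)
        = (∫ s in (0:ℝ)..1, Real.exp (-(α * s)) * (s ^ β + 1))
          + ∫ s in (1:ℝ)..b, Real.exp (-(α * s)) * (s ^ β + 1) :=
      (intervalIntegral.integral_add_adjacent_intervals (hint 0 1) (hint 1 b)).symm
    have hsecond : ∫ s in (1:ℝ)..b, Real.exp (-(α * s)) * (s ^ β + 1) ≤ 2 / α := by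
      have hmono : ∫ s in (1:ℝ)..b, Real.exp (-(α * s)) * (s ^ β + 1)
          ≤ ∫ s in (1:ℝ)..b, 2 * Real.exp (-(α * s)) := by
        refine intervalIntegral.integral_mono_on hb1 (hint 1 b)
          ((continuous_const.mul (Real.continuous_exp.comp
            (continuous_const.mul continuous_id).neg)).intervalIntegrable 1 b) ?_
        intro s hs
        have h1 : s ^ β ≤ 1 := Real.rpow_le_one_of_one_le_of_nonpos hs.1 hβ0.le
        have h2 : (0:ℝ) < Real.exp (-(α * s)) := Real.exp_pos _
        nlinarith
      have hcomp : ∫ s in (1:ℝ)..b, 2 * Real.exp (-(α * s))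
          = 2 * ((Real.exp (-α * b) - Real.exp (-α * 1)) / (-α)) := by
        rw [intervalIntegral.integral_const_mul]
        rw [show (fun s : ℝ => Real.exp (-(α * s))) = fun s : ℝ => Real.exp ((-α) * s) by
          funext s; rw [neg_mul]]
        rw [integral_exp_mul (-α) 1 b (by linarith)]
      refine hmono.trans ?_
      rw [hcomp]
      have e1 : Real.exp (-α * b) ≤ Real.exp (-α * 1) := Real.exp_le_exp.2 (by nlinarith)
      have e2 : 0 < Real.exp (-α * b) := Real.exp_pos _
      have e3 : Real.exp (-α * 1) ≤ 1 := Real.exp_le_one_iff.2 (by linarith)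
      rw [div_neg, ← neg_div]
      rw [show -(Real.exp (-α * b) - Real.exp (-α * 1)) = Real.exp (-α * 1) - Real.exp (-α * b) by ring]
      rw [mul_div_assoc', div_le_div_iff₀ (by positivity) (by positivity)]
      nlinarith
    have hone := hfirst 1 zero_le_one le_rfl
    rw [hsplit]
    linarith


lemma rker_symm (H u v : ℝ) : rker H u v = rker H v u := by
  unfold rker
  rw [mul_comm (Real.exp (u / H)) (Real.exp (v / H)), abs_sub_comm]

lemma rker_le_aux {H : ℝ} (h1 : 1/2 < H) (h2 : H < 1) {u v : ℝ} (huv : u < v) :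
    rker H u v ≤ (H ^ (2*H-1) * (2*H-1) * (1 - Real.exp (-1)) ^ (2*H-2) * (H ^ (-(2*H-2)) + 1))
      * (|u - v| ^ (2*H-2) + 1) := by
  have hH0 : (0:ℝ) < H := by linarith
  set β : ℝ := 2*H - 2 with hβdef
  set δ : ℝ := 2*H - 1 with hδdef
  have hβ0 : β < 0 := by rw [hβdef]; linarith
  have hδ0 : 0 < δ := by rw [hδdef]; linarith
  set x : ℝ := (v - u) / H with hxdef
  have hx : 0 < x := by
    exact div_pos (by linarith) hH0
  have hc0 : (0:ℝ) < 1 - Real.exp (-1) := by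
    have : Real.exp (-1) < 1 := Real.exp_lt_one_iff.2 (by norm_num)
    linarith
  have hex : (0:ℝ) < 1 - Real.exp (-x) := by
    have : Real.exp (-x) < 1 := Real.exp_lt_one_iff.2 (by linarith)
    linarith
  have hvx : v / H + (-x) = u / H := by
    rw [hxdef]; field_simp; ring
  have habs : |Real.exp (u / H) - Real.exp (v / H)| = Real.exp (v / H) * (1 - Real.exp (-x)) := by
    have h3 : Real.exp (u / H) < Real.exp (v / H) := by
      apply Real.exp_lt_exp.2
      exact (div_lt_div_iff_of_pos_right hH0).2 huv
    rw [abs_of_neg (by linarith : Real.exp (u / H) - Real.exp (v / H) < 0)]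
    rw [mul_sub, mul_one, ← Real.exp_add, hvx]
    ring
  have hEuv : (Real.exp (u/H) * Real.exp (v/H)) ^ (1-H) = Real.exp ((u/H + v/H) * (1-H)) := by
    rw [← Real.exp_add, Real.rpow_def_of_pos (Real.exp_pos _), Real.log_exp]
  have hEv : Real.exp (v/H) ^ β = Real.exp ((v/H) * β) := by
    rw [Real.rpow_def_of_pos (Real.exp_pos _), Real.log_exp]
  have hprod : Real.exp ((u/H + v/H)*(1-H)) * Real.exp ((v/H)*β) = Real.exp (-((1-H)*x)) := by
    rw [← Real.exp_add]; congr 1; rw [hxdef, hβdef]; field_simp; ring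
  have hrw : rker H u v = H ^ δ * δ * (Real.exp (-((1-H)*x)) * (1 - Real.exp (-x)) ^ β) := by
    unfold rker
    rw [habs, Real.mul_rpow (Real.exp_pos _).le hex.le, hEuv, hEv, ← hprod]
    ring
  have s1 : Real.exp (-((1-H)*x)) ≤ 1 := Real.exp_le_one_iff.2 (by nlinarith)
  have s2 : (1 - Real.exp (-x)) ^ β ≤ ((1 - Real.exp (-1)) * min x 1) ^ β :=
    Real.rpow_le_rpow_of_nonpos (mul_pos hc0 (lt_min hx one_pos)) (one_sub_exp_lb hx.le) hβ0.le
  have s3 : ((1 - Real.exp (-1)) * min x 1) ^ β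
      = (1 - Real.exp (-1)) ^ β * (min x 1) ^ β :=
    Real.mul_rpow hc0.le (le_min hx.le zero_le_one)
  have s4 : (min x 1 : ℝ) ^ β ≤ x ^ β + 1 := min_rpow_le hx hβ0.le
  have s5 : x ^ β = (v - u) ^ β * H ^ (-β) := by
    rw [hxdef, Real.div_rpow (by linarith) hH0.le, Real.rpow_neg hH0.le, div_eq_mul_inv]
  have habs2 : |u - v| = v - u := by
    rw [abs_of_neg (by linarith : u - v < 0)]; ring
  have hnn : (0:ℝ) ≤ (1 - Real.exp (-x)) ^ β := Real.rpow_nonneg hex.le β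
  have hc0β : (0:ℝ) ≤ (1 - Real.exp (-1)) ^ β := Real.rpow_nonneg hc0.le β
  have hvu : (0:ℝ) ≤ (v-u)^β := Real.rpow_nonneg (by linarith) β
  have hHβ : (0:ℝ) ≤ H^(-β) := Real.rpow_nonneg hH0.le _
  have key : Real.exp (-((1-H)*x)) * (1 - Real.exp (-x)) ^ β
      ≤ (1 - Real.exp (-1)) ^ β * (H ^ (-β) + 1) * (|u - v| ^ β + 1) := by
    calc Real.exp (-((1-H)*x)) * (1 - Real.exp (-x)) ^ β
        ≤ 1 * (1 - Real.exp (-x)) ^ β := mul_le_mul_of_nonneg_right s1 hnn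
      _ = (1 - Real.exp (-x)) ^ β := one_mul _
      _ ≤ (1 - Real.exp (-1)) ^ β * (min x 1) ^ β := by rw [← s3]; exact s2
      _ ≤ (1 - Real.exp (-1)) ^ β * (x ^ β + 1) := mul_le_mul_of_nonneg_left s4 hc0β
      _ = (1 - Real.exp (-1)) ^ β * ((v-u) ^ β * H^(-β) + 1) := by rw [s5]
      _ ≤ (1 - Real.exp (-1)) ^ β * ((H^(-β) + 1) * ((v-u)^β + 1)) := by
          apply mul_le_mul_of_nonneg_left ?_ hc0β
          nlinarith
      _ = (1 - Real.exp (-1)) ^ β * (H ^ (-β) + 1) * (|u - v| ^ β + 1) := by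
          rw [habs2]; ring
  have hA : (0:ℝ) ≤ H ^ δ * δ := mul_nonneg (Real.rpow_nonneg hH0.le δ) hδ0.le
  calc rker H u v = H ^ δ * δ * (Real.exp (-((1-H)*x)) * (1 - Real.exp (-x)) ^ β) := hrw
    _ ≤ H ^ δ * δ * ((1 - Real.exp (-1)) ^ β * (H ^ (-β) + 1) * (|u - v| ^ β + 1)) :=
        mul_le_mul_of_nonneg_left key hA
    _ = H ^ δ * δ * (1 - Real.exp (-1)) ^ β * (H ^ (-β) + 1) * (|u - v| ^ β + 1) := by ring

lemma rker_nonneg {H : ℝ} (hH0 : 0 < H) (hδ : 0 ≤ 2*H-1) (u v : ℝ) : 0 ≤ rker H u v := by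
  unfold rker
  have a1 : (0:ℝ) ≤ H ^ (2*H-1) := Real.rpow_nonneg hH0.le _
  have a2 : (0:ℝ) ≤ (Real.exp (u / H) * Real.exp (v / H)) ^ (1 - H) :=
    Real.rpow_nonneg (by positivity) _
  have a3 : (0:ℝ) ≤ |Real.exp (u / H) - Real.exp (v / H)| ^ (2*H-2) :=
    Real.rpow_nonneg (abs_nonneg _) _
  exact mul_nonneg (mul_nonneg (mul_nonneg a1 hδ) a2) a3

lemma rker_le {H : ℝ} (h1 : 1/2 < H) (h2 : H < 1) (u v : ℝ) :
    rker H u v ≤ (H ^ (2*H-1) * (2*H-1) * (1 - Real.exp (-1)) ^ (2*H-2) * (H ^ (-(2*H-2)) + 1))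
      * (|u - v| ^ (2*H-2) + 1) := by
  have hH0 : (0:ℝ) < H := by linarith
  have hc0 : (0:ℝ) < 1 - Real.exp (-1) := by
    have : Real.exp (-1) < 1 := Real.exp_lt_one_iff.2 (by norm_num)
    linarith
  rcases lt_trichotomy u v with h | h | h
  · exact rker_le_aux h1 h2 h
  · subst h
    have hz : rker H u u = 0 := by
      unfold rker
      rw [sub_self, abs_zero, Real.zero_rpow (by intro hc; linarith : 2*H-2 ≠ 0)]
      ring
    rw [hz]
    have b1 : (0:ℝ) ≤ H ^ (2*H-1) * (2*H-1) * (1 - Real.exp (-1)) ^ (2*H-2) * (H ^ (-(2*H-2)) + 1) := by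
      apply mul_nonneg (mul_nonneg (mul_nonneg (Real.rpow_nonneg hH0.le _) (by linarith))
        (Real.rpow_nonneg hc0.le _))
      have := Real.rpow_nonneg hH0.le (-(2*H-2))
      linarith
    have b2 : (0:ℝ) ≤ |u - u| ^ (2*H-2) + 1 := by
      have := Real.rpow_nonneg (abs_nonneg (u - u)) (2*H-2)
      linarith
    exact mul_nonneg b1 b2
  · rw [rker_symm H u v, abs_sub_comm u v]
    exact rker_le_aux h1 h2 h


lemma inner_int {α β : ℝ} (hβ1 : -1 < β) (u a b : ℝ) :
    IntervalIntegrable (fun v : ℝ => Real.exp (α * v) * (|u - v| ^ β + 1)) volume a b := by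
  have h1 : IntervalIntegrable (fun v : ℝ => |u - v| ^ β) volume a b := by
    have h2 := (abs_rpow_int hβ1 (u - b) (u - a)).comp_sub_left u
    simpa using h2.symm
  exact (h1.add intervalIntegrable_const).continuousOn_mul
    (Real.continuous_exp.comp (continuous_const.mul continuous_id)).continuousOn

lemma inner_bound {α β : ℝ} (hα : 0 < α) (hβ1 : -1 < β) (hβ0 : β < 0) {T u : ℝ}
    (hu0 : 0 ≤ u) (huT : u ≤ T) :
    ∫ v in (0:ℝ)..T, Real.exp (α * v) * (|u - v| ^ β + 1)
      ≤ Real.exp (α * u) * (1 / (β + 1) + 1 + 2 / α)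
        + Real.exp (α * T) * ((1 / (β + 1) + 1) * ((1 + 2 / α) * Real.exp (α * (T - u) / 2))) := by
  have hδ : 0 < β + 1 := by linarith
  have hsplit : ∫ v in (0:ℝ)..T, Real.exp (α * v) * (|u - v| ^ β + 1)
      = (∫ v in (0:ℝ)..u, Real.exp (α * v) * (|u - v| ^ β + 1))
        + ∫ v in u..T, Real.exp (α * v) * (|u - v| ^ β + 1) :=
    (intervalIntegral.integral_add_adjacent_intervals (inner_int hβ1 u 0 u)
      (inner_int hβ1 u u T)).symm
  have hA : ∫ v in (0:ℝ)..u, Real.exp (α * v) * (|u - v| ^ β + 1)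
      ≤ Real.exp (α * u) * (1 / (β + 1) + 1 + 2 / α) := by
    have e1 : ∫ v in (0:ℝ)..u, Real.exp (α * v) * (|u - v| ^ β + 1)
        = ∫ v in (0:ℝ)..u, (fun s => Real.exp (α * (u - s)) * (s ^ β + 1)) (u - v) := by
      apply intervalIntegral.integral_congr
      intro v hv
      rw [Set.uIcc_of_le hu0] at hv
      show Real.exp (α * v) * (|u - v| ^ β + 1)
          = Real.exp (α * (u - (u - v))) * ((u - v) ^ β + 1)
      rw [abs_of_nonneg (by linarith [hv.2] : (0:ℝ) ≤ u - v), sub_sub_cancel]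
    rw [e1, intervalIntegral.integral_comp_sub_left
      (fun s => Real.exp (α * (u - s)) * (s ^ β + 1)) u]
    rw [sub_self, sub_zero]
    have e2 : ∫ s in (0:ℝ)..u, Real.exp (α * (u - s)) * (s ^ β + 1)
        = Real.exp (α * u) * ∫ s in (0:ℝ)..u, Real.exp (-(α * s)) * (s ^ β + 1) := by
      rw [← intervalIntegral.integral_const_mul]
      apply intervalIntegral.integral_congr
      intro s _
      show Real.exp (α * (u - s)) * (s ^ β + 1)
          = Real.exp (α * u) * (Real.exp (-(α * s)) * (s ^ β + 1))
      rw [← mul_assoc, ← Real.exp_add]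
      ring_nf
    rw [e2]
    exact mul_le_mul_of_nonneg_left (lemD hα hβ1 hβ0 hu0) (Real.exp_pos _).le
  have hB : ∫ v in u..T, Real.exp (α * v) * (|u - v| ^ β + 1)
      ≤ Real.exp (α * T) * ((1 / (β + 1) + 1) * ((1 + 2 / α) * Real.exp (α * (T - u) / 2))) := by
    have e1 : ∫ v in u..T, Real.exp (α * v) * (|u - v| ^ β + 1)
        = ∫ v in u..T, (fun s => Real.exp (α * (s + u)) * (s ^ β + 1)) (v - u) := by
      apply intervalIntegral.integral_congr
      intro v hv
      rw [Set.uIcc_of_le huT] at hv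
      show Real.exp (α * v) * (|u - v| ^ β + 1)
          = Real.exp (α * (v - u + u)) * ((v - u) ^ β + 1)
      rw [show |u - v| = v - u by
        rw [abs_sub_comm]; exact abs_of_nonneg (by linarith [hv.1])]
      rw [sub_add_cancel]
    rw [e1, intervalIntegral.integral_comp_sub_right
      (fun s => Real.exp (α * (s + u)) * (s ^ β + 1)) u]
    rw [sub_self]
    have int1 : IntervalIntegrable (fun s : ℝ => Real.exp (α * (s + u)) * (s ^ β + 1))
        volume 0 (T - u) :=
      (rpow_add_one_int hβ1 0 (T - u)).continuousOn_mul
        (Real.continuous_exp.comp (continuous_const.mul (continuous_id.add continuous_const))).continuousOn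
    have int2 : IntervalIntegrable (fun s : ℝ => Real.exp (α * T) * (s ^ β + 1))
        volume 0 (T - u) :=
      (rpow_add_one_int hβ1 0 (T - u)).const_mul _
    have mono : ∫ s in (0:ℝ)..(T - u), Real.exp (α * (s + u)) * (s ^ β + 1)
        ≤ ∫ s in (0:ℝ)..(T - u), Real.exp (α * T) * (s ^ β + 1) := by
      apply intervalIntegral.integral_mono_on (by linarith) int1 int2
      intro s hs
      have h3 : Real.exp (α * (s + u)) ≤ Real.exp (α * T) :=
        Real.exp_le_exp.2 (by nlinarith [hs.1, hs.2])
      have h4 := Real.rpow_nonneg hs.1 β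
      nlinarith
    have comp : ∫ s in (0:ℝ)..(T - u), Real.exp (α * T) * (s ^ β + 1)
        = Real.exp (α * T) * ((T - u) ^ (β + 1) / (β + 1) + (T - u)) := by
      rw [intervalIntegral.integral_const_mul,
        intervalIntegral.integral_add (intervalIntegrable_rpow' hβ1) intervalIntegrable_const,
        integral_rpow (Or.inl hβ1), intervalIntegral.integral_const,
        Real.zero_rpow (by linarith : β + 1 ≠ 0)]
      simp
    have bnd : (T - u) ^ (β + 1) / (β + 1) + (T - u)
        ≤ (1 / (β + 1) + 1) * ((1 + 2 / α) * Real.exp (α * (T - u) / 2)) := by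
      have ht : (0:ℝ) ≤ T - u := by linarith
      have p1 : (T - u) ^ (β + 1) ≤ 1 + (T - u) := rpow_le_one_add ht hδ.le (by linarith)
      have p2 : 1 + (T - u) ≤ (1 + 2 / α) * Real.exp (α * (T - u) / 2) :=
        one_add_le_exp hα ht
      have p3 : (T - u) ^ (β + 1) / (β + 1) ≤ (1 + (T - u)) / (β + 1) := by gcongr
      calc (T - u) ^ (β + 1) / (β + 1) + (T - u)
          ≤ (1 + (T - u)) / (β + 1) + (1 + (T - u)) := by linarith
        _ = (1 / (β + 1) + 1) * (1 + (T - u)) := by ring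
        _ ≤ (1 / (β + 1) + 1) * ((1 + 2 / α) * Real.exp (α * (T - u) / 2)) := by
            apply mul_le_mul_of_nonneg_left p2
            positivity
    calc ∫ s in (0:ℝ)..(T - u), Real.exp (α * (s + u)) * (s ^ β + 1)
        ≤ ∫ s in (0:ℝ)..(T - u), Real.exp (α * T) * (s ^ β + 1) := mono
      _ = Real.exp (α * T) * ((T - u) ^ (β + 1) / (β + 1) + (T - u)) := comp
      _ ≤ Real.exp (α * T) * ((1 / (β + 1) + 1) * ((1 + 2 / α) * Real.exp (α * (T - u) / 2))) :=
          mul_le_mul_of_nonneg_left bnd (Real.exp_pos _).le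
  rw [hsplit]
  exact add_le_add hA hB

end Stmt17Aux

open Stmt17Aux

theorem stmt17 (H α : ℝ) (hH : H ∈ Set.Ioo (1/2 : ℝ) 1) (hα : 0 < α) :
    ∃ C : ℝ, 0 < C ∧ ∀ T : ℝ, 0 < T →
      (∫ u in (0:ℝ)..T, ∫ v in (0:ℝ)..T,
          Real.exp (α * u) * Real.exp (α * v) * rker H u v)
        ≤ C * Real.exp (2 * α * T) := by
  obtain ⟨h1, h2⟩ := hH
  have hH0 : (0:ℝ) < H := by linarith
  have hβ1 : (-1:ℝ) < 2*H-2 := by linarith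
  have hβ0 : 2*H-2 < 0 := by linarith
  have hc0 : (0:ℝ) < 1 - Real.exp (-1) := by
    have : Real.exp (-1) < 1 := Real.exp_lt_one_iff.2 (by norm_num)
    linarith
  set K : ℝ := H ^ (2*H-1) * (2*H-1) * (1 - Real.exp (-1)) ^ (2*H-2) * (H ^ (-(2*H-2)) + 1)
    with hKdef
  have hK : 0 < K := by
    rw [hKdef]
    apply mul_pos (mul_pos (mul_pos (Real.rpow_pos_of_pos hH0 _) (by linarith))
      (Real.rpow_pos_of_pos hc0 _))
    have := Real.rpow_pos_of_pos hH0 (-(2*H-2))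
    linarith
  have hden : (0:ℝ) < 2*H-2+1 := by linarith
  have hq0 : (0:ℝ) < 1/(2*H-2+1) := div_pos one_pos hden
  have hα2 : (0:ℝ) < 2/α := by positivity
  have hM1 : (0:ℝ) < 1/(2*H-2+1) + 1 + 2/α := by linarith
  have hqp : (0:ℝ) < (1/(2*H-2+1) + 1) * (1 + 2/α) := by
    apply mul_pos (by linarith) (by linarith)
  refine ⟨K * ((1/(2*H-2+1) + 1 + 2/α)/(2*α) + 2*((1/(2*H-2+1) + 1) * (1 + 2/α))/α), ?_, ?_⟩
  · apply mul_pos hK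
    have d1 : (0:ℝ) < (1/(2*H-2+1) + 1 + 2/α)/(2*α) := div_pos hM1 (by linarith)
    have d2 : (0:ℝ) < 2*((1/(2*H-2+1) + 1) * (1 + 2/α))/α := by
      apply div_pos (by linarith) hα
    linarith
  intro T hT
  have fnn : ∀ u v : ℝ, 0 ≤ Real.exp (α*u) * Real.exp (α*v) * rker H u v := fun u v =>
    mul_nonneg (mul_nonneg (Real.exp_pos _).le (Real.exp_pos _).le)
      (rker_nonneg hH0 (by linarith) u v)
  -- the dominating function
  set Φ : ℝ → ℝ := fun u => K * Real.exp (α*u) *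
      (Real.exp (α*u) * (1/(2*H-2+1) + 1 + 2/α)
        + Real.exp (α*T) * ((1/(2*H-2+1) + 1) * ((1 + 2/α) * Real.exp (α*(T-u)/2))))
    with hΦdef
  have key : ∀ u ∈ Set.Ioc (0:ℝ) T,
      (∫ v in (0:ℝ)..T, Real.exp (α*u) * Real.exp (α*v) * rker H u v) ≤ Φ u := by
    intro u hu
    have hu0 : (0:ℝ) ≤ u := hu.1.le
    have huT : u ≤ T := hu.2
    have g_int : IntervalIntegrable
        (fun v => (K * Real.exp (α*u)) * (Real.exp (α*v) * (|u - v| ^ (2*H-2) + 1)))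
        volume 0 T := (inner_int hβ1 u 0 T).const_mul _
    have step1 : (∫ v in (0:ℝ)..T, Real.exp (α*u) * Real.exp (α*v) * rker H u v)
        ≤ ∫ v in (0:ℝ)..T, (K * Real.exp (α*u)) * (Real.exp (α*v) * (|u - v| ^ (2*H-2) + 1)) := by
      rw [intervalIntegral.integral_of_le hT.le, intervalIntegral.integral_of_le hT.le]
      apply MeasureTheory.integral_mono_of_nonneg
      · exact Filter.Eventually.of_forall (fun v => fnn u v)
      · exact g_int.1
      · apply Filter.Eventually.of_forall
        intro v
        calc Real.exp (α*u) * Real.exp (α*v) * rker H u v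
            ≤ Real.exp (α*u) * Real.exp (α*v) * (K * (|u - v| ^ (2*H-2) + 1)) := by
              rw [hKdef]
              exact mul_le_mul_of_nonneg_left (rker_le h1 h2 u v) (by positivity)
          _ = (K * Real.exp (α*u)) * (Real.exp (α*v) * (|u - v| ^ (2*H-2) + 1)) := by ring
    have step2 : ∫ v in (0:ℝ)..T, (K * Real.exp (α*u)) * (Real.exp (α*v) * (|u - v| ^ (2*H-2) + 1))
        = (K * Real.exp (α*u)) * ∫ v in (0:ℝ)..T, Real.exp (α*v) * (|u - v| ^ (2*H-2) + 1) :=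
      intervalIntegral.integral_const_mul _ _
    have step3 := inner_bound hα hβ1 hβ0 hu0 huT
    calc (∫ v in (0:ℝ)..T, Real.exp (α*u) * Real.exp (α*v) * rker H u v)
        ≤ ∫ v in (0:ℝ)..T, (K * Real.exp (α*u)) * (Real.exp (α*v) * (|u - v| ^ (2*H-2) + 1)) :=
          step1
      _ = (K * Real.exp (α*u)) * ∫ v in (0:ℝ)..T, Real.exp (α*v) * (|u - v| ^ (2*H-2) + 1) :=
          step2
      _ ≤ Φ u := by
          simp only [hΦdef]
          exact mul_le_mul_of_nonneg_left step3 (mul_nonneg hK.le (Real.exp_pos _).le)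
  have hΦcont : Continuous Φ := by
    rw [hΦdef]
    fun_prop
  have outer1 : (∫ u in (0:ℝ)..T, ∫ v in (0:ℝ)..T,
        Real.exp (α*u) * Real.exp (α*v) * rker H u v)
      ≤ ∫ u in (0:ℝ)..T, Φ u := by
    rw [intervalIntegral.integral_of_le hT.le, intervalIntegral.integral_of_le hT.le]
    apply MeasureTheory.integral_mono_of_nonneg
    · exact Filter.Eventually.of_forall (fun u =>
        intervalIntegral.integral_nonneg hT.le (fun v _ => fnn u v))
    · exact hΦcont.integrableOn_Ioc
    · exact (MeasureTheory.ae_restrict_iff' measurableSet_Ioc).2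
        (Filter.Eventually.of_forall key)
  have hΦeq : ∀ u : ℝ, Φ u
      = (K * (1/(2*H-2+1) + 1 + 2/α)) * Real.exp (2*α*u)
        + (K * ((1/(2*H-2+1) + 1) * (1 + 2/α)) * Real.exp (α*T) * Real.exp (α*T/2))
            * Real.exp (α/2*u) := by
    intro u
    rw [hΦdef]
    show K * Real.exp (α*u) * _ = _
    rw [show α*(T-u)/2 = α*T/2 + -(α/2*u) by ring, Real.exp_add]
    rw [show 2*α*u = α*u + α*u by ring, Real.exp_add]
    rw [show Real.exp (α/2*u) = Real.exp (α*u) * Real.exp (-(α/2*u)) by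
      rw [← Real.exp_add]; congr 1; ring]
    ring
  have hcomp : ∫ u in (0:ℝ)..T, Φ u
      = (K * (1/(2*H-2+1) + 1 + 2/α)) * ((Real.exp (2*α*T) - 1)/(2*α))
        + (K * ((1/(2*H-2+1) + 1) * (1 + 2/α)) * Real.exp (α*T) * Real.exp (α*T/2))
            * ((Real.exp (α/2*T) - 1)/(α/2)) := by
    rw [intervalIntegral.integral_congr (fun u _ => hΦeq u)]
    have i1 : IntervalIntegrable
        (fun u : ℝ => (K * (1/(2*H-2+1) + 1 + 2/α)) * Real.exp (2*α*u)) volume 0 T :=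
      Continuous.intervalIntegrable (by fun_prop) 0 T
    have i2 : IntervalIntegrable
        (fun u : ℝ => (K * ((1/(2*H-2+1) + 1) * (1 + 2/α)) * Real.exp (α*T) * Real.exp (α*T/2))
          * Real.exp (α/2*u)) volume 0 T :=
      Continuous.intervalIntegrable (by fun_prop) 0 T
    rw [intervalIntegral.integral_add i1 i2]
    rw [intervalIntegral.integral_const_mul, intervalIntegral.integral_const_mul]
    rw [integral_exp_mul (2*α) 0 T (by positivity), integral_exp_mul (α/2) 0 T (by positivity)]
    norm_num
  have hE : (0:ℝ) < Real.exp (2*α*T) := Real.exp_pos _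
  have he2 : (0:ℝ) < Real.exp (α/2*T) := Real.exp_pos _
  have b1 : (Real.exp (2*α*T) - 1)/(2*α) ≤ Real.exp (2*α*T)/(2*α) := by
    gcongr
    linarith
  have b2 : (Real.exp (α/2*T) - 1)/(α/2) ≤ Real.exp (α/2*T)/(α/2) := by
    gcongr
    linarith
  have eprod : Real.exp (α*T) * Real.exp (α*T/2) * Real.exp (α/2*T) = Real.exp (2*α*T) := by
    rw [← Real.exp_add, ← Real.exp_add]
    congr 1
    ring
  have hcoef1 : (0:ℝ) ≤ K * (1/(2*H-2+1) + 1 + 2/α) := by positivity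
  have hcoef2 : (0:ℝ) ≤ K * ((1/(2*H-2+1) + 1) * (1 + 2/α)) * Real.exp (α*T) * Real.exp (α*T/2) := by
    positivity
  calc (∫ u in (0:ℝ)..T, ∫ v in (0:ℝ)..T, Real.exp (α*u) * Real.exp (α*v) * rker H u v)
      ≤ ∫ u in (0:ℝ)..T, Φ u := outer1
    _ = (K * (1/(2*H-2+1) + 1 + 2/α)) * ((Real.exp (2*α*T) - 1)/(2*α))
        + (K * ((1/(2*H-2+1) + 1) * (1 + 2/α)) * Real.exp (α*T) * Real.exp (α*T/2))
            * ((Real.exp (α/2*T) - 1)/(α/2)) := hcomp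
    _ ≤ (K * (1/(2*H-2+1) + 1 + 2/α)) * (Real.exp (2*α*T)/(2*α))
        + (K * ((1/(2*H-2+1) + 1) * (1 + 2/α)) * Real.exp (α*T) * Real.exp (α*T/2))
            * (Real.exp (α/2*T)/(α/2)) :=
        add_le_add (mul_le_mul_of_nonneg_left b1 hcoef1) (mul_le_mul_of_nonneg_left b2 hcoef2)
    _ = K * ((1/(2*H-2+1) + 1 + 2/α)/(2*α) + 2*((1/(2*H-2+1) + 1) * (1 + 2/α))/α)
          * Real.exp (2*α*T) := by
        rw [← eprod]
        field_simp
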